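/- arXiv:1301.1378 — 4 statements merged into one kernel-verified Lean document; each statement's English description precedes it below -/
import Mathlib

section
/- Given three similitude contractions T_k(z) = p_k + φ_k(z - p_k), k = 1,2,3, with |φ_k| ∈ (0,1), set α_k = (1 - |φ_k|)/|1 - φ_k| and C = 2 (p_2 - p_1) × (p_2 - p_3) (cross product of complex numbers). If the three circumcircle conditions |p_k - c|² = α_k² r² (k=1,2,3) admit a solution (c,r) ∈ ℂ × ℝ_+, and additionally A := (α_3²-α_2²)p_1 + (α_1²-α_3²)p_2 + (α_2²-α_1²)p_3 = 0, then C ≠ 0 implies c = B/(Ci) with B := (|p_2|²-|p_3|²)p_1 + (|p_3|²-|p_1|²)p_2 + (|p_1|²-|p_2|²)p_3, and r = |c - p_1|/α_1. -/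
/-- Cross product of two complex numbers. -/
def ccross (z₁ z₂ : ℂ) : ℝ := z₁.re * z₂.im - z₁.im * z₂.re

/-- the degenerate case A = 0 of the trifractal circumcircle:
if the three circumcircle conditions hold, A = 0 and C ≠ 0, then
c = B/(Ci) and r = |c - p₁|/α₁. -/
theorem stmt11 (p₁ p₂ p₃ φ₁ φ₂ φ₃ : ℂ)
    (h₁ : ‖φ₁‖ ∈ Set.Ioo (0:ℝ) 1)
    (h₂ : ‖φ₂‖ ∈ Set.Ioo (0:ℝ) 1)
    (h₃ : ‖φ₃‖ ∈ Set.Ioo (0:ℝ) 1)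
    (α₁ α₂ α₃ : ℝ)
    (hα₁ : α₁ = (1 - ‖φ₁‖) / ‖1 - φ₁‖)
    (hα₂ : α₂ = (1 - ‖φ₂‖) / ‖1 - φ₂‖)
    (hα₃ : α₃ = (1 - ‖φ₃‖) / ‖1 - φ₃‖)
    (A B : ℂ) (C : ℝ)
    (hA : A = (α₃^2 - α₂^2) * p₁ + (α₁^2 - α₃^2) * p₂ + (α₂^2 - α₁^2) * p₃)
    (hB : B = ((‖p₂‖)^2 - (‖p₃‖)^2) * p₁
            + ((‖p₃‖)^2 - (‖p₁‖)^2) * p₂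
            + ((‖p₁‖)^2 - (‖p₂‖)^2) * p₃)
    (hC : C = 2 * ccross (p₂ - p₁) (p₂ - p₃))
    (c : ℂ) (r : ℝ) (hr : 0 < r)
    (hcond₁ : ‖p₁ - c‖ ^ 2 = α₁^2 * r^2)
    (hcond₂ : ‖p₂ - c‖ ^ 2 = α₂^2 * r^2)
    (hcond₃ : ‖p₃ - c‖ ^ 2 = α₃^2 * r^2)
    (hA0 : A = 0) (hC0 : C ≠ 0) :
    c = B / ((C : ℂ) * Complex.I) ∧ r = ‖c - p₁‖ / α₁ := by
  have hφ₁ : φ₁ ≠ 1 := by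
    intro h; rw [h] at h₁; simp at h₁
  have hden : (0:ℝ) < ‖1 - φ₁‖ := by
    rw [norm_pos_iff]
    intro h; apply hφ₁; linear_combination -h
  have hα₁pos : 0 < α₁ := by
    rw [hα₁]
    exact div_pos (by linarith [h₁.2]) hden
  have csq : ∀ z : ℂ, ((‖z‖ : ℂ))^2 = ((Complex.normSq z : ℝ) : ℂ) := by
    intro z; rw [← Complex.ofReal_pow, Complex.sq_norm]
  -- key algebraic identity
  have key : ((‖p₂ - c‖)^2 - (‖p₃ - c‖)^2 : ℂ) * p₁
      + ((‖p₃ - c‖)^2 - (‖p₁ - c‖)^2 : ℂ) * p₂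
      + ((‖p₁ - c‖)^2 - (‖p₂ - c‖)^2 : ℂ) * p₃
      = B - (C : ℂ) * Complex.I * c := by
    simp only [hB, hC, ccross, csq]
    apply Complex.ext <;>
      simp [Complex.normSq_apply, Complex.add_re, Complex.add_im, Complex.mul_re,
        Complex.mul_im, Complex.sub_re, Complex.sub_im, Complex.ofReal_re,
        Complex.ofReal_im, Complex.I_re, Complex.I_im] <;> ring
  have c1 : ((‖p₁ - c‖ : ℂ))^2 = (α₁:ℂ)^2 * (r:ℂ)^2 := by
    exact_mod_cast congrArg (Complex.ofReal) hcond₁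
  have c2 : ((‖p₂ - c‖ : ℂ))^2 = (α₂:ℂ)^2 * (r:ℂ)^2 := by
    exact_mod_cast congrArg (Complex.ofReal) hcond₂
  have c3 : ((‖p₃ - c‖ : ℂ))^2 = (α₃:ℂ)^2 * (r:ℂ)^2 := by
    exact_mod_cast congrArg (Complex.ofReal) hcond₃
  have key2 : ((‖p₂ - c‖)^2 - (‖p₃ - c‖)^2 : ℂ) * p₁
      + ((‖p₃ - c‖)^2 - (‖p₁ - c‖)^2 : ℂ) * p₂
      + ((‖p₁ - c‖)^2 - (‖p₂ - c‖)^2 : ℂ) * p₃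
      = -((r^2 : ℂ) * A) := by
    rw [c1, c2, c3, hA]; push_cast; ring
  have hBc : B = (C : ℂ) * Complex.I * c := by
    have h := key.symm.trans key2
    rw [hA0, mul_zero, neg_zero] at h
    linear_combination h
  have hCI : (C : ℂ) * Complex.I ≠ 0 := by
    simp [Complex.ext_iff, hC0]
  constructor
  · rw [hBc]; field_simp; exact (mul_div_cancel_right₀ c (by exact_mod_cast hC0)).symm
  · have habs : ‖c - p₁‖ = α₁ * r := by
      have h1 : ‖c - p₁‖ = ‖p₁ - c‖ :=
        norm_sub_rev c p₁
      rw [h1]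
      have h2 : ‖p₁ - c‖ = Real.sqrt (α₁^2 * r^2) := by
        rw [← hcond₁, Real.sqrt_sq (norm_nonneg _)]
      rw [h2, show α₁^2 * r^2 = (α₁*r)^2 by ring, Real.sqrt_sq (by positivity)]
    rw [habs]
    field_simp
end

section
/- Any solution (c, r) ∈ ℂ × ℝ_+ of the system |p_k - c|² = α_k² r² for k = 1,2,3 satisfies the linear relation A r² + B − C i · c = 0, where A = (α_3²-α_2²)p_1 + (α_1²-α_3²)p_2 + (α_2²-α_1²)p_3, B = (|p_2|²-|p_3|²)p_1 + (|p_3|²-|p_1|²)p_2 + (|p_1|²-|p_2|²)p_3, and C = 2(p_2-p_1)×(p_2-p_3). -/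
/-- any solution of the system |p_k - c|² = α_k² r² (k=1,2,3)
satisfies A r² + B - C i c = 0. -/
theorem stmt12 (p₁ p₂ p₃ : ℂ) (α₁ α₂ α₃ : ℝ)
    (A B : ℂ) (C : ℝ)
    (hA : A = (α₃^2 - α₂^2) * p₁ + (α₁^2 - α₃^2) * p₂ + (α₂^2 - α₁^2) * p₃)
    (hB : B = (‖p₂‖^2 - ‖p₃‖^2) * p₁
            + (‖p₃‖^2 - ‖p₁‖^2) * p₂
            + (‖p₁‖^2 - ‖p₂‖^2) * p₃)
    (hC : C = 2 * ccross (p₂ - p₁) (p₂ - p₃))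
    (c : ℂ) (r : ℝ) (hr : 0 < r)
    (hcond₁ : ‖p₁ - c‖ ^ 2 = α₁^2 * r^2)
    (hcond₂ : ‖p₂ - c‖ ^ 2 = α₂^2 * r^2)
    (hcond₃ : ‖p₃ - c‖ ^ 2 = α₃^2 * r^2) :
    A * (r : ℂ)^2 + B - (C : ℂ) * Complex.I * c = 0 := by
  simp only [Complex.sq_norm, Complex.normSq_apply, Complex.sub_re, Complex.sub_im] at hcond₁ hcond₂ hcond₃
  subst hA hB hC
  simp only [← Complex.ofReal_pow, Complex.sq_norm, Complex.normSq_apply]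
  rw [Complex.ext_iff]
  simp only [ccross, Complex.add_re, Complex.add_im, Complex.sub_re, Complex.sub_im,
    Complex.mul_re, Complex.mul_im, Complex.ofReal_re, Complex.ofReal_im,
    Complex.I_re, Complex.I_im, Complex.zero_re, Complex.zero_im, Complex.ofReal_mul]
  constructor
  · linear_combination (p₃.re - p₂.re) * hcond₁ + (p₁.re - p₃.re) * hcond₂ +
      (p₂.re - p₁.re) * hcond₃
  · linear_combination (p₃.im - p₂.im) * hcond₁ + (p₁.im - p₃.im) * hcond₂ +
      (p₂.im - p₁.im) * hcond₃
end

section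
/- With T_1, T_2, φ_1, φ_2, p_1, p_2, λ = (λ_1+λ_2)/2 and ν = (λ_2-λ_1)/(2(1-λ)) as given, assume the denominator (1-ν)(1-φ_1) + (1+ν)(1-φ_2) ≠ 0. Then c = ((1-ν)(1-φ_1)p_1 + (1+ν)(1-φ_2)p_2) / ((1-ν)(1-φ_1) + (1+ν)(1-φ_2)) together with r = |1-φ_1|·|1-φ_2|·|p_2-p_1| / ((1-λ)·|(1-ν)(1-φ_1) + (1+ν)(1-φ_2)|) is the unique fixed point of the map M from the bifractal circumcircle construction. -/
/-- the bifractal circumcircle (c,r) given by the explicit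
formulas is the unique fixed point of the map M. -/
theorem stmt15 (p₁ p₂ φ₁ φ₂ : ℂ)
    (h₁ : ‖φ₁‖ ∈ Set.Ioo (0:ℝ) 1) (h₂ : ‖φ₂‖ ∈ Set.Ioo (0:ℝ) 1)
    (hp : p₁ ≠ p₂)
    (T₁ T₂ : ℂ → ℂ) (hT₁ : ∀ z, T₁ z = p₁ + φ₁ * (z - p₁))
    (hT₂ : ∀ z, T₂ z = p₂ + φ₂ * (z - p₂))
    (lam ν : ℝ) (hlam : lam = (‖φ₁‖ + ‖φ₂‖) / 2)
    (hν : ν = (‖φ₂‖ - ‖φ₁‖) / (2 * (1 - lam)))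
    (m₁ : ℂ → ℝ → ℂ) (m₂ : ℂ → ℝ → ℝ)
    (hm₁ : ∀ z s, m₁ z s = (T₁ z + T₂ z) / 2 +
      (s : ℂ) * ((‖φ₂‖ - ‖φ₁‖ : ℝ) / 2 : ℂ) *
        ((T₂ z - T₁ z) / (‖T₂ z - T₁ z‖ : ℂ)))
    (hm₂ : ∀ z s, m₂ z s = lam * s + ‖T₂ z - T₁ z‖ / 2)
    (hden : ((1:ℂ) - ν) * (1 - φ₁) + ((1:ℂ) + ν) * (1 - φ₂) ≠ 0)
    (c : ℂ) (r : ℝ)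
    (hc : c = (((1:ℂ) - ν) * (1 - φ₁) * p₁ + ((1:ℂ) + ν) * (1 - φ₂) * p₂) /
              (((1:ℂ) - ν) * (1 - φ₁) + ((1:ℂ) + ν) * (1 - φ₂)))
    (hr : r = ‖1 - φ₁‖ * ‖1 - φ₂‖ * ‖p₂ - p₁‖ /
              ((1 - lam) *
                ‖((1:ℂ) - ν) * (1 - φ₁) + ((1:ℂ) + ν) * (1 - φ₂)‖)) :
    (T₁ c ≠ T₂ c ∧ m₁ c r = c ∧ m₂ c r = r) ∧
    ∀ (c' : ℂ) (r' : ℝ), T₁ c' ≠ T₂ c' → m₁ c' r' = c' → m₂ c' r' = r' →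
      c' = c ∧ r' = r := by
  obtain ⟨h1pos, h1lt⟩ := h₁
  obtain ⟨h2pos, h2lt⟩ := h₂
  have hlampos : (0:ℝ) < 1 - lam := by rw [hlam]; linarith
  have hlamne : (1:ℝ) - lam ≠ 0 := ne_of_gt hlampos
  have hlamC : (1:ℂ) - (lam:ℝ) ≠ 0 := by
    simpa using Complex.ofReal_ne_zero.mpr hlamne
  have hφ₁ne : (1:ℂ) - φ₁ ≠ 0 := by
    intro h
    have : φ₁ = 1 := by linear_combination -h
    rw [this] at h1lt; simp at h1lt
  have hφ₂ne : (1:ℂ) - φ₂ ≠ 0 := by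
    intro h
    have : φ₂ = 1 := by linear_combination -h
    rw [this] at h2lt; simp at h2lt
  have hpne : p₂ - p₁ ≠ 0 := sub_ne_zero.mpr hp.symm
  have hsub : ‖φ₂‖ - ‖φ₁‖ = ν * (2 * (1 - lam)) := by
    rw [hν]; field_simp
  have hsubC : ((‖φ₂‖ : ℂ) - (‖φ₁‖ : ℂ)) = (ν:ℂ) * (2 * (1 - (lam:ℂ))) := by
    exact_mod_cast congrArg (Complex.ofReal) hsub
  have hcA : (((1:ℂ) - ν) * (1 - φ₁) + ((1:ℂ) + ν) * (1 - φ₂)) * c = ((1:ℂ) - ν) * (1 - φ₁) * p₁ + ((1:ℂ) + ν) * (1 - φ₂) * p₂ := by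
    rw [hc]; field_simp
  have hD : (((1:ℂ) - ν) * (1 - φ₁) + ((1:ℂ) + ν) * (1 - φ₂)) * (T₂ c - T₁ c) = 2 * ((1 - φ₁) * ((1 - φ₂) * (p₂ - p₁))) := by
    rw [hT₁, hT₂]
    linear_combination (φ₂ - φ₁) * hcA
  have hDne : T₂ c - T₁ c ≠ 0 := by
    intro h
    rw [h, mul_zero] at hD
    have := mul_ne_zero hφ₁ne (mul_ne_zero hφ₂ne hpne)
    have h2 : (2:ℂ) ≠ 0 := two_ne_zero
    exact (mul_ne_zero h2 this) hD.symm
  have hAne : ‖((1:ℂ) - ν) * (1 - φ₁) + ((1:ℂ) + ν) * (1 - φ₂)‖ ≠ 0 := by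
    simpa using hden
  have habs : ‖((1:ℂ) - ν) * (1 - φ₁) + ((1:ℂ) + ν) * (1 - φ₂)‖ * ‖T₂ c - T₁ c‖
      = 2 * (‖1 - φ₁‖ * (‖1 - φ₂‖ * ‖p₂ - p₁‖)) := by
    rw [← norm_mul, hD]
    simp [norm_mul]
  have habsD : ‖T₂ c - T₁ c‖ = 2 * (1 - lam) * r := by
    rw [hr]
    rw [mul_div_assoc', eq_div_iff (mul_ne_zero hlamne hAne)]
    linear_combination (1 - lam) * habs
  have hDpos : 0 < ‖T₂ c - T₁ c‖ := norm_pos_iff.mpr hDne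
  have hrpos : 0 < r := by nlinarith
  have hrne : (r:ℂ) ≠ 0 := by exact_mod_cast ne_of_gt hrpos
  -- the key simplification of the drift coefficient
  have key : ∀ z : ℂ, T₂ z - T₁ z ≠ 0 → ∀ s : ℝ, (s:ℝ) ≠ 0 →
      ‖T₂ z - T₁ z‖ = 2 * (1 - lam) * s →
      (s : ℂ) * ((‖φ₂‖ - ‖φ₁‖ : ℝ) / 2 : ℂ) *
        ((T₂ z - T₁ z) / (‖T₂ z - T₁ z‖ : ℂ)) = ((ν:ℂ) / 2) * (T₂ z - T₁ z) := by
    intro z hz s hs habs'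
    rw [habs']
    push_cast
    rw [hsubC]
    have hsC : (s:ℂ) ≠ 0 := by exact_mod_cast hs
    field_simp
  constructor
  · refine ⟨fun h => hDne (by rw [h]; ring), ?_, ?_⟩
    · rw [hm₁, key c hDne r (ne_of_gt hrpos) habsD]
      rw [hT₁, hT₂]
      linear_combination (-1/2 : ℂ) * hcA
    · rw [hm₂, habsD]; ring
  · intro c' r' hT hm1' hm2'
    have hD'ne : T₂ c' - T₁ c' ≠ 0 := sub_ne_zero.mpr (Ne.symm hT)
    have hD'pos : 0 < ‖T₂ c' - T₁ c'‖ := norm_pos_iff.mpr hD'ne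
    rw [hm₂ c' r'] at hm2'
    have habs' : ‖T₂ c' - T₁ c'‖ = 2 * (1 - lam) * r' := by linarith
    have hr'pos : 0 < r' := by nlinarith
    rw [hm₁ c' r', key c' hD'ne r' (ne_of_gt hr'pos) habs'] at hm1'
    have hcA' : (((1:ℂ) - ν) * (1 - φ₁) + ((1:ℂ) + ν) * (1 - φ₂)) * c'
        = ((1:ℂ) - ν) * (1 - φ₁) * p₁ + ((1:ℂ) + ν) * (1 - φ₂) * p₂ := by
      rw [hT₁, hT₂] at hm1'
      linear_combination (-2 : ℂ) * hm1'
    have hcc : c' = c := mul_left_cancel₀ hden (hcA'.trans hcA.symm)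
    refine ⟨hcc, ?_⟩
    rw [hcc] at habs'
    rw [habsD] at habs'
    exact (mul_left_cancel₀ (by positivity : (2 * (1 - lam) : ℝ) ≠ 0) habs').symm
end

section
/- Let F be the attractor of an IFS of contractions with factors λ_k ≤ λ_* < 1, let B(c,r) ⊇ F, and for each L let (c_L, r_L) be the minimum covering circle of the finite point set {T_w(c) : w ∈ {1,...,n}^L}. Then the bounding radius r_L + λ_*^L r of F satisfies r_L + λ_*^L r → r_F as L → ∞, where r_F is the radius of the minimum covering circle of F; in particular, for every ε > 0 there exists L such that r_L + λ_*^L r ≤ r_F + ε. -/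
/-- Composition T_w = T_{w₁} ∘ ⋯ ∘ T_{w_L} of IFS maps along a word w. -/
def applyWord {n : ℕ} (T : Fin n → ℂ → ℂ) : List (Fin n) → ℂ → ℂ :=
  fun w => w.foldr (fun k f => T k ∘ f) id

/-- the improved bounding radii r_L + λ_*^L r obtained from the
minimum covering circles of the level-L center sets converge to the minimum
covering radius r_F of the attractor F. -/
theorem stmt18 (n : ℕ) (hn : 0 < n) (T : Fin n → ℂ → ℂ)
    (lam : Fin n → NNReal) (lamS : ℝ)
    (hTk : ∀ k, LipschitzWith (lam k) (T k))
    (hlam : ∀ k, (lam k : ℝ) ≤ lamS) (hlamS : lamS < 1)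
    (F : Set ℂ) (hFne : F.Nonempty) (hFc : IsCompact F)
    (hFfix : (⋃ k, T k '' F) = F)
    (c : ℂ) (r : ℝ) (hB : F ⊆ Metric.closedBall c r)
    (cL : ℕ → ℂ) (rL : ℕ → ℝ)
    (hcov : ∀ L, ∀ w : List (Fin n), w.length = L →
        applyWord T w c ∈ Metric.closedBall (cL L) (rL L))
    (hmin : ∀ L (c' : ℂ) (r' : ℝ),
        (∀ w : List (Fin n), w.length = L →
          applyWord T w c ∈ Metric.closedBall c' r') → rL L ≤ r')
    (cF : ℂ) (rF : ℝ) (hFcov : F ⊆ Metric.closedBall cF rF)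
    (hFmin : ∀ (c' : ℂ) (r' : ℝ), F ⊆ Metric.closedBall c' r' → rF ≤ r') :
    Filter.Tendsto (fun L => rL L + lamS ^ L * r) Filter.atTop (nhds rF) ∧
    ∀ ε > (0:ℝ), ∃ L, rL L + lamS ^ L * r ≤ rF + ε := by
  have hlamS0 : 0 ≤ lamS := le_trans (lam ⟨0, hn⟩).coe_nonneg (hlam ⟨0, hn⟩)
  obtain ⟨x0, hx0⟩ := hFne
  have hr0 : 0 ≤ r := le_trans dist_nonneg (hB hx0)
  have hLip : ∀ w : List (Fin n), ∀ x y : ℂ,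
      dist (applyWord T w x) (applyWord T w y) ≤ lamS ^ w.length * dist x y := by
    intro w
    induction w with
    | nil => intro x y; simp [applyWord]
    | cons k w ih =>
      intro x y
      have h1 : dist (applyWord T (k :: w) x) (applyWord T (k :: w) y)
          ≤ (lam k : ℝ) * dist (applyWord T w x) (applyWord T w y) :=
        (hTk k).dist_le_mul (applyWord T w x) (applyWord T w y)
      calc dist (applyWord T (k :: w) x) (applyWord T (k :: w) y)
          ≤ (lam k : ℝ) * dist (applyWord T w x) (applyWord T w y) := h1
        _ ≤ lamS * (lamS ^ w.length * dist x y) :=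
            mul_le_mul (hlam k) (ih x y) dist_nonneg hlamS0
        _ = lamS ^ (k :: w).length * dist x y := by
            rw [List.length_cons, pow_succ]; ring
  have himg : ∀ w : List (Fin n), ∀ y ∈ F, applyWord T w y ∈ F := by
    intro w
    induction w with
    | nil => intro y hy; simpa [applyWord] using hy
    | cons k w ih =>
      intro y hy
      have : T k (applyWord T w y) ∈ ⋃ k, T k '' F :=
        Set.mem_iUnion.2 ⟨k, Set.mem_image_of_mem _ (ih y hy)⟩
      rw [hFfix] at this
      exact this
  have hcover : ∀ L, ∀ x ∈ F, ∃ w : List (Fin n), w.length = L ∧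
      ∃ y ∈ F, applyWord T w y = x := by
    intro L
    induction L with
    | zero => intro x hx; exact ⟨[], rfl, x, hx, rfl⟩
    | succ L ih =>
      intro x hx
      rw [← hFfix] at hx
      obtain ⟨k, z, hz, hzx⟩ := Set.mem_iUnion.1 hx
      obtain ⟨w, hwlen, y, hy, hwy⟩ := ih z hz
      exact ⟨k :: w, by simp [hwlen], y, hy, by
        show T k (applyWord T w y) = x
        rw [hwy, hzx]⟩
  have hub : ∀ L, rL L ≤ rF + lamS ^ L * r := by
    intro L
    apply hmin L cF
    intro w hw
    rw [Metric.mem_closedBall]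
    calc dist (applyWord T w c) cF
        ≤ dist (applyWord T w c) (applyWord T w x0) + dist (applyWord T w x0) cF :=
          dist_triangle _ _ _
      _ ≤ lamS ^ L * r + rF := by
          apply add_le_add
          · calc dist (applyWord T w c) (applyWord T w x0)
                ≤ lamS ^ w.length * dist c x0 := hLip w c x0
              _ ≤ lamS ^ L * r := by
                  rw [hw]
                  exact mul_le_mul_of_nonneg_left
                    (by rw [dist_comm]; exact hB hx0) (pow_nonneg hlamS0 L)
          · exact hFcov (himg w x0 hx0)
      _ = rF + lamS ^ L * r := add_comm _ _
  have hlb : ∀ L, rF ≤ rL L + lamS ^ L * r := by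
    intro L
    apply hFmin (cL L)
    intro x hx
    obtain ⟨w, hwlen, y, hy, hwy⟩ := hcover L x hx
    rw [Metric.mem_closedBall]
    calc dist x (cL L)
        ≤ dist x (applyWord T w c) + dist (applyWord T w c) (cL L) := dist_triangle _ _ _
      _ ≤ lamS ^ L * r + rL L := by
          apply add_le_add
          · calc dist x (applyWord T w c) = dist (applyWord T w y) (applyWord T w c) := by
                  rw [hwy]
              _ ≤ lamS ^ w.length * dist y c := hLip w y c
              _ ≤ lamS ^ L * r := by
                  rw [hwlen]
                  exact mul_le_mul_of_nonneg_left (hB hy) (pow_nonneg hlamS0 L)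
          · exact hcov L w hwlen
      _ = rL L + lamS ^ L * r := add_comm _ _
  have h0 : Filter.Tendsto (fun L => lamS ^ L * r) Filter.atTop (nhds 0) := by
    have := (tendsto_pow_atTop_nhds_zero_of_lt_one hlamS0 hlamS).mul_const r
    simpa using this
  have htend : Filter.Tendsto (fun L => rL L + lamS ^ L * r) Filter.atTop (nhds rF) := by
    have hupper : Filter.Tendsto (fun L => rF + lamS ^ L * r + lamS ^ L * r)
        Filter.atTop (nhds rF) := by
      have hc : Filter.Tendsto (fun _ : ℕ => rF) Filter.atTop (nhds rF) :=
        tendsto_const_nhds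
      have := (hc.add h0).add h0
      simpa using this
    refine tendsto_of_tendsto_of_tendsto_of_le_of_le tendsto_const_nhds hupper hlb ?_
    intro L
    exact add_le_add (hub L) le_rfl
  refine ⟨htend, fun ε hε => ?_⟩
  have : ∀ᶠ L in Filter.atTop, rL L + lamS ^ L * r < rF + ε :=
    htend.eventually (gt_mem_nhds (lt_add_of_pos_right rF hε))
  obtain ⟨L, hL⟩ := this.exists
  exact ⟨L, hL.le⟩
end
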